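/- Let n > 1 be a real number and W : ℝ → ℝ be continuously differentiable on [1,∞) with W'(1) = 0 and with W' differentiable at 1, and suppose λ ↦ W'(λ)/(λⁿ − 1) is integrable on (1,∞). Define P(c) = (1 + cⁿ)^{(n−1)/n} · ∫_{(1+cⁿ)^{1/n}}^{∞} W'(λ)/(λⁿ − 1) dλ for c > 0. Then the derivative of P tends to 0 as c → 0⁺, i.e. deriv P (c) → 0 along the filter of c approaching 0 from the right. -/

import Mathlib

open Real MeasureTheory Set Filter

/-- The derivative of the dead-load function P tends to 0 as the cavity radius
tends to 0 from the right. -/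
theorem deriv_deadload_tendsto_zero (n : ℝ) (hn : 1 < n) (W : ℝ → ℝ)
    (hW : ContDiffOn ℝ 1 W (Ici 1))
    (hW1 : deriv W 1 = 0)
    (hW2 : DifferentiableAt ℝ (deriv W) 1)
    (hInt : IntegrableOn (fun l => deriv W l / (l ^ n - 1)) (Ioi 1))
    (P : ℝ → ℝ)
    (hP : ∀ c : ℝ, 0 < c → P c = (1 + c ^ n) ^ ((n - 1) / n) *
      ∫ l in Ioi ((1 + c ^ n) ^ (1 / n)), deriv W l / (l ^ n - 1)) :
    Tendsto (deriv P) (nhdsWithin 0 (Ioi 0)) (nhds 0) := by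
  have hn0 : (0:ℝ) < n := by linarith
  have hnne : n ≠ 0 := ne_of_gt hn0
  set f : ℝ → ℝ := fun l => deriv W l / (l ^ n - 1) with hfdef
  set F : ℝ → ℝ := fun x => ∫ l in Ioi x, f l with hFdef
  set g : ℝ → ℝ := fun c : ℝ => (1 + c ^ n) ^ (1/n) with hgdef
  -- continuity of deriv W at x > 1
  have hderivW_cont : ∀ x : ℝ, 1 < x → ContinuousAt (deriv W) x := by
    intro x hx
    have h1 : ContinuousOn (derivWithin W (Ici 1)) (Ici 1) :=
      hW.continuousOn_derivWithin (uniqueDiffOn_Ici 1) le_rfl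
    have h2 : ContinuousAt (derivWithin W (Ici 1)) x :=
      h1.continuousAt (Ici_mem_nhds hx)
    have heq : derivWithin W (Ici 1) =ᶠ[nhds x] deriv W := by
      filter_upwards [eventually_gt_nhds hx] with y hy
      exact derivWithin_of_mem_nhds (Ici_mem_nhds hy)
    exact h2.congr heq
  have hf_cont : ∀ x : ℝ, 1 < x → ContinuousAt f x := by
    intro x hx
    have hden : ContinuousAt (fun l : ℝ => l ^ n - 1) x :=
      (Real.continuousAt_rpow_const x n (Or.inl (by linarith))).sub continuousAt_const
    have hne : x ^ n - 1 ≠ 0 := by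
      have : (1:ℝ) < x ^ n := Real.one_lt_rpow hx hn0
      linarith
    exact (hderivW_cont x hx).div hden hne
  -- FTC: derivative of F
  have hF_deriv : ∀ x : ℝ, 1 < x → HasDerivAt F (-(f x)) x := by
    intro x hx
    have hloc : F =ᶠ[nhds x] fun y => (∫ l in Ioi 1, f l) - ∫ l in (1:ℝ)..y, f l := by
      filter_upwards [eventually_gt_nhds hx] with y hy
      have hsplit : (∫ l in Ioi 1, f l) = (∫ l in Ioc 1 y, f l) + ∫ l in Ioi y, f l := by
        rw [← setIntegral_union (Ioc_disjoint_Ioi le_rfl) measurableSet_Ioi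
          (hInt.mono_set Ioc_subset_Ioi_self) (hInt.mono_set (Ioi_subset_Ioi hy.le)),
          Ioc_union_Ioi_eq_Ioi hy.le]
      rw [intervalIntegral.integral_of_le hy.le]
      simp only [hFdef]
      rw [hsplit]; ring
    have hI : IntervalIntegrable f volume 1 x := by
      rw [intervalIntegrable_iff_integrableOn_Ioc_of_le hx.le]
      exact hInt.mono_set Ioc_subset_Ioi_self
    have hmeas : StronglyMeasurableAtFilter f (nhds x) volume :=
      ContinuousAt.stronglyMeasurableAtFilter isOpen_Ioi (fun y hy => hf_cont y hy) x hx
    have h1 : HasDerivAt (fun y => ∫ l in (1:ℝ)..y, f l) (f x) x :=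
      intervalIntegral.integral_hasDerivAt_right hI hmeas (hf_cont x hx)
    have h2 := (hasDerivAt_const x (∫ l in Ioi 1, f l)).sub h1
    have h3 := h2.congr_of_eventuallyEq hloc
    simpa using h3
  -- explicit formula for deriv P on (0, ∞)
  have hderiv : ∀ c : ℝ, 0 < c → deriv P c =
      (n-1) * ((c^(n-1) * (1 + c^n)^(-(1/n))) * F (g c))
        - deriv W (g c) / (g c - 1) * ((g c - 1) / c^n) * c^(n-1) := by
    intro c hc
    have hcn : 0 < c ^ n := Real.rpow_pos_of_pos hc n
    have hu1 : 1 < 1 + c ^ n := by linarith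
    have hu0 : (0:ℝ) < 1 + c ^ n := by linarith
    have hucn : HasDerivAt (fun c : ℝ => 1 + c ^ n) (n * c ^ (n-1)) c := by
      exact (Real.hasDerivAt_rpow_const (p := n) (Or.inl hc.ne')).const_add 1
    have hgd : HasDerivAt g ((n * c^(n-1)) * (1/n) * (1 + c^n) ^ (1/n - 1)) c :=
      hucn.rpow_const (Or.inl hu0.ne')
    have hAd : HasDerivAt (fun c : ℝ => (1 + c^n)^((n-1)/n))
        ((n * c^(n-1)) * ((n-1)/n) * (1 + c^n)^((n-1)/n - 1)) c :=
      hucn.rpow_const (Or.inl hu0.ne')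
    have hg1 : 1 < g c := Real.one_lt_rpow hu1 (by positivity)
    have hgyn : (g c) ^ n = 1 + c ^ n := by
      rw [hgdef]
      show ((1 + c ^ n) ^ (1/n)) ^ n = 1 + c ^ n
      rw [← Real.rpow_mul hu0.le, one_div_mul_cancel hnne, Real.rpow_one]
    have hFg : HasDerivAt F (-(f (g c))) (g c) := hF_deriv _ hg1
    have hQ : HasDerivAt (fun c : ℝ => (1 + c^n)^((n-1)/n) * F (g c))
        (((n * c^(n-1)) * ((n-1)/n) * (1 + c^n)^((n-1)/n - 1)) * F (g c)
          + (1 + c^n)^((n-1)/n) * ((-(f (g c)))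
              * ((n * c^(n-1)) * (1/n) * (1 + c^n) ^ (1/n - 1)))) c :=
      hAd.mul (hFg.comp c hgd)
    have hPQ : P =ᶠ[nhds c] fun c : ℝ => (1 + c^n)^((n-1)/n) * F (g c) := by
      filter_upwards [eventually_gt_nhds hc] with y hy
      rw [hP y hy]
    have hPd := (hQ.congr_of_eventuallyEq hPQ).deriv
    rw [hPd]
    have hexp : (n-1)/n - 1 = -(1/n) := by field_simp; ring
    have hmul : (1 + c^n)^((n-1)/n) * (1 + c^n)^(1/n - 1) = 1 := by
      rw [← Real.rpow_add hu0, show (n-1)/n + (1/n - 1) = 0 by field_simp; ring, Real.rpow_zero]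
    have hyne : g c - 1 ≠ 0 := sub_ne_zero.mpr (ne_of_gt hg1)
    have hbne : c ^ n ≠ 0 := hcn.ne'
    simp only [hfdef]
    rw [hgyn, add_sub_cancel_left, hexp]
    set w := deriv W (g c) with hw
    set Fg := F (g c) with hFg2
    set r1 := (1 + c^n)^((n-1)/n) with hr1
    set r2 := (1 + c^n)^(1/n - 1) with hr2
    set r3 := (1 + c^n)^(-(1/n)) with hr3
    set a := c ^ (n-1) with ha
    set b := c ^ n with hb
    have e1 : (n * a * ((n-1)/n) * r3) * Fg = (n-1) * ((a * r3) * Fg) := by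
      field_simp
    have e2 : r1 * (-(w/b) * (n * a * (1/n) * r2)) = -(w/(g c - 1) * ((g c - 1)/b) * a) := by
      field_simp [hbne, hyne, hnne]
      linear_combination (-(w * a)) * hmul
    linear_combination e1 + e2
  -- basic limits
  have hcnm1 : Tendsto (fun c : ℝ => c^(n-1)) (nhdsWithin 0 (Ioi 0)) (nhds 0) := by
    have h := (Real.continuousAt_rpow_const 0 (n-1) (Or.inr (by linarith))).tendsto
    rw [Real.zero_rpow (by linarith : (0:ℝ) < n - 1).ne'] at h
    exact h.mono_left nhdsWithin_le_nhds
  have hcn0 : Tendsto (fun c : ℝ => c^n) (nhdsWithin 0 (Ioi 0)) (nhds 0) := by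
    have h := (Real.continuousAt_rpow_const 0 n (Or.inr hn0.le)).tendsto
    rw [Real.zero_rpow hnne] at h
    exact h.mono_left nhdsWithin_le_nhds
  have hu : Tendsto (fun c : ℝ => 1 + c^n) (nhdsWithin 0 (Ioi 0)) (nhds 1) := by
    simpa using tendsto_const_nhds.add hcn0
  have hg0 : Tendsto g (nhdsWithin 0 (Ioi 0)) (nhds 1) := by
    have h := (Real.continuousAt_rpow_const 1 (1/n) (Or.inl one_ne_zero)).tendsto
    rw [Real.one_rpow] at h
    exact h.comp hu
  have hr3 : Tendsto (fun c : ℝ => (1 + c^n)^(-(1/n))) (nhdsWithin 0 (Ioi 0)) (nhds 1) := by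
    have h := (Real.continuousAt_rpow_const 1 (-(1/n)) (Or.inl one_ne_zero)).tendsto
    rw [Real.one_rpow] at h
    exact h.comp hu
  have hfacts : ∀ c : ℝ, 0 < c → 0 < c ^ n ∧ 1 < g c := by
    intro c hc
    have hcn : 0 < c ^ n := Real.rpow_pos_of_pos hc n
    exact ⟨hcn, Real.one_lt_rpow (by linarith) (by positivity)⟩
  -- boundedness of F ∘ g
  have hFb : ∀ x : ℝ, 1 ≤ x → ‖F x‖ ≤ ∫ l in Ioi 1, ‖f l‖ := by
    intro x hx
    rw [hFdef]
    refine (norm_integral_le_integral_norm _).trans ?_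
    exact setIntegral_mono_set hInt.norm (ae_of_all _ fun l => norm_nonneg _)
      (HasSubset.Subset.eventuallyLE (Ioi_subset_Ioi hx))
  have hbound : IsBoundedUnder (· ≤ ·) (nhdsWithin (0:ℝ) (Ioi 0)) (fun c => ‖F (g c)‖) := by
    refine ⟨∫ l in Ioi 1, ‖f l‖, eventually_map.2 ?_⟩
    filter_upwards [self_mem_nhdsWithin] with c hc
    exact hFb _ (hfacts c hc).2.le
  -- first term tends to 0
  have hT1 : Tendsto (fun c : ℝ => (n-1) * ((c^(n-1) * (1 + c^n)^(-(1/n))) * F (g c)))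
      (nhdsWithin 0 (Ioi 0)) (nhds 0) := by
    have h1 : Tendsto (fun c : ℝ => c^(n-1) * (1 + c^n)^(-(1/n)))
        (nhdsWithin 0 (Ioi 0)) (nhds 0) := by
      simpa using hcnm1.mul hr3
    have h2 := h1.zero_mul_isBoundedUnder_le hbound
    simpa using h2.const_mul (n-1)
  -- second term tends to 0
  have hgne : Tendsto g (nhdsWithin 0 (Ioi 0)) (nhdsWithin 1 {x | x ≠ 1}) := by
    rw [tendsto_nhdsWithin_iff]
    refine ⟨hg0, ?_⟩
    filter_upwards [self_mem_nhdsWithin] with c hc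
    exact ne_of_gt (hfacts c hc).2
  have hune : Tendsto (fun c : ℝ => 1 + c^n) (nhdsWithin 0 (Ioi 0))
      (nhdsWithin 1 {x | x ≠ 1}) := by
    rw [tendsto_nhdsWithin_iff]
    refine ⟨hu, ?_⟩
    filter_upwards [self_mem_nhdsWithin] with c hc
    have := (hfacts c hc).1
    show 1 + c ^ n ≠ 1
    intro h'
    linarith
  have hslopeW : Tendsto (fun c : ℝ => deriv W (g c) / (g c - 1)) (nhdsWithin 0 (Ioi 0))
      (nhds (deriv (deriv W) 1)) := by
    have h := hW2.hasDerivAt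
    rw [hasDerivAt_iff_tendsto_slope] at h
    have h2 := h.comp hgne
    refine h2.congr ?_
    intro c
    simp [Function.comp, slope_def_field, hW1]
  have hsloperpow : Tendsto (fun c : ℝ => (g c - 1) / c^n) (nhdsWithin 0 (Ioi 0))
      (nhds (1/n)) := by
    have h : HasDerivAt (fun x : ℝ => x ^ (1/n)) ((1/n) * (1:ℝ) ^ (1/n - 1)) 1 :=
      Real.hasDerivAt_rpow_const (Or.inl one_ne_zero)
    rw [Real.one_rpow, mul_one] at h
    rw [hasDerivAt_iff_tendsto_slope] at h
    have h2 := h.comp hune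
    refine h2.congr ?_
    intro c
    simp only [Function.comp_apply, slope_def_field, Real.one_rpow, add_sub_cancel_left]
    rfl
  have hT2 : Tendsto (fun c : ℝ => deriv W (g c) / (g c - 1) * ((g c - 1) / c^n) * c^(n-1))
      (nhdsWithin 0 (Ioi 0)) (nhds 0) := by
    simpa using (hslopeW.mul hsloperpow).mul hcnm1
  have hD : Tendsto (fun c : ℝ => (n-1) * ((c^(n-1) * (1 + c^n)^(-(1/n))) * F (g c))
      - deriv W (g c) / (g c - 1) * ((g c - 1) / c^n) * c^(n-1))
      (nhdsWithin 0 (Ioi 0)) (nhds 0) := by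
    simpa using hT1.sub hT2
  refine hD.congr' ?_
  filter_upwards [self_mem_nhdsWithin] with c hc
  exact (hderiv c hc).symm
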